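/- arXiv:2211.00781 — 7 statements merged into one kernel-verified Lean document; each statement's English description precedes it below -/
import Mathlib

section
/- Let L be a finite distributive lattice and S = {f_i}_{i ∈ I} a finite family of join-endomorphisms of L. Define δ(c) = ⨅ { ⨆_{i∈I} f_i(a_i) | (a_i)_{i∈I} a tuple of elements of L with ⨆_{i∈I} a_i ≥ c }. Then δ is the greatest join-endomorphism h of L such that h ≤ f_i pointwise for all i ∈ I. -/
def IsJoinEndo {L : Type*} [Lattice L] [OrderBot L] (f : L → L) : Prop :=
  f ⊥ = ⊥ ∧ ∀ a b, f (a ⊔ b) = f a ⊔ f b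

theorem delta_star_is_meet {L : Type*} [DistribLattice L] [OrderBot L] [Fintype L]
    {I : Type*} [Fintype I] (f : I → L → L) (hf : ∀ i, IsJoinEndo (f i))
    (δ : L → L)
    (hδ : ∀ c : L, IsGLB {x : L | ∃ a : I → L,
        c ≤ Finset.univ.sup a ∧ x = Finset.univ.sup (fun i => f i (a i))} (δ c)) :
    IsJoinEndo δ ∧ (∀ i, δ ≤ f i) ∧
      ∀ h : L → L, IsJoinEndo h → (∀ i, h ≤ f i) → h ≤ δ := by
  classical
  set S : L → Set L := fun c => {x : L | ∃ a : I → L,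
      c ≤ Finset.univ.sup a ∧ x = Finset.univ.sup (fun i => f i (a i))}
  have hδ' : ∀ c : L, IsGLB (S c) (δ c) := hδ
  -- monotonicity of δ
  have hmono : ∀ {c d : L}, c ≤ d → δ c ≤ δ d := by
    intro c d hcd
    refine (hδ' d).2 ?_
    intro x hx
    obtain ⟨a, ha, hxa⟩ := hx
    exact (hδ' c).1 ⟨a, le_trans hcd ha, hxa⟩
  -- δ ⊥ = ⊥
  have hbot : δ ⊥ = ⊥ := by
    refine le_antisymm ((hδ' ⊥).1 ?_) bot_le
    refine ⟨fun _ => ⊥, bot_le, ?_⟩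
    simp [(fun i => (hf i).1)]
  -- δ ≤ f i
  have hle : ∀ i, δ ≤ f i := by
    intro i c
    refine (hδ' c).1 ⟨fun j => if j = i then c else ⊥, ?_, ?_⟩
    · refine le_trans (le_of_eq ?_) (Finset.le_sup (Finset.mem_univ i))
      simp
    · refine le_antisymm ?_ ?_
      · refine le_trans (le_of_eq ?_) (Finset.le_sup (f := fun j => f j
          (if j = i then c else ⊥)) (Finset.mem_univ i))
        simp
      · refine Finset.sup_le ?_
        intro j _
        by_cases hji : j = i
        · subst hji; simp
        · simp [hji, (hf j).1]
  -- join preservation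
  have hjoin : ∀ a b : L, δ (a ⊔ b) = δ a ⊔ δ b := by
    intro a b
    refine le_antisymm ?_ (sup_le (hmono le_sup_left) (hmono le_sup_right))
    by_cases hI : Nonempty I
    · -- nonempty index: the sets S c are nonempty finite sets
      have hne : ∀ c : L, (S c).toFinset.Nonempty := by
        intro c
        rw [Set.toFinset_nonempty]
        haveI := hI
        exact ⟨_, ⟨fun _ => c, (Finset.sup_const Finset.univ_nonempty c).ge, rfl⟩⟩
      have hinf : ∀ c : L, δ c = (S c).toFinset.inf' (hne c) id := by
        intro c
        refine le_antisymm (Finset.le_inf' _ _ fun x hx => (hδ' c).1 ?_)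
          ((hδ' c).2 fun x hx => Finset.inf'_le id (Set.mem_toFinset.2 hx))
        exact Set.mem_toFinset.1 hx
      rw [hinf a, hinf b, Finset.inf'_sup_inf']
      refine Finset.le_inf' _ _ ?_
      rintro ⟨x, y⟩ hxy
      rw [Finset.mem_product] at hxy
      obtain ⟨u, hu, hxu⟩ := Set.mem_toFinset.1 hxy.1
      obtain ⟨v, hv, hyv⟩ := Set.mem_toFinset.1 hxy.2
      refine (hδ' (a ⊔ b)).1 ⟨fun i => u i ⊔ v i, ?_, ?_⟩
      · rw [show (fun i => u i ⊔ v i) = u ⊔ v from rfl, Finset.sup_sup]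
        exact sup_le_sup hu hv
      · simp only [fun i => (hf i).2 (u i) (v i)]
        rw [show (fun i => f i (u i) ⊔ f i (v i)) =
          (fun i => f i (u i)) ⊔ (fun i => f i (v i)) from rfl, Finset.sup_sup,
          ← hxu, ← hyv]
        rfl
    · -- empty index: all sups over univ are ⊥
      have hempty : IsEmpty I := not_nonempty_iff.1 hI
      have hSc : ∀ c : L, S c = {x : L | c ≤ ⊥ ∧ x = ⊥} := by
        intro c
        ext x
        constructor
        · rintro ⟨a, ha, hx⟩
          simp only [Finset.univ_eq_empty, Finset.sup_empty] at ha hx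
          exact ⟨ha, hx⟩
        · rintro ⟨hc, hx⟩
          exact ⟨fun i => isEmptyElim i, by simpa using hc, by simpa using hx⟩
      by_cases hab : a ⊔ b ≤ ⊥
      · have : δ (a ⊔ b) = ⊥ := by
          refine le_antisymm ((hδ' (a ⊔ b)).1 ?_) bot_le
          rw [hSc]; exact ⟨hab, rfl⟩
        simp [this]
      · -- one of a, b is not ≤ ⊥; the corresponding S sets are both empty
        have hc : ¬ a ≤ ⊥ ∨ ¬ b ≤ ⊥ := by
          by_contra hcon
          push_neg at hcon
          exact hab (sup_le hcon.1 hcon.2)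
        rcases hc with hc | hc
        · have heq : S (a ⊔ b) = S a := by
            rw [hSc, hSc]
            ext x
            simp only [Set.mem_setOf_eq]
            exact ⟨fun ⟨h1, h2⟩ => absurd (le_trans le_sup_left h1) hc,
              fun ⟨h1, _⟩ => absurd h1 hc⟩
          have := IsGLB.unique (heq ▸ hδ' (a ⊔ b)) (hδ' a)
          rw [this]; exact le_sup_left
        · have heq : S (a ⊔ b) = S b := by
            rw [hSc, hSc]
            ext x
            simp only [Set.mem_setOf_eq]
            exact ⟨fun ⟨h1, h2⟩ => absurd (le_trans le_sup_right h1) hc,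
              fun ⟨h1, _⟩ => absurd h1 hc⟩
          have := IsGLB.unique (heq ▸ hδ' (a ⊔ b)) (hδ' b)
          rw [this]; exact le_sup_right
  refine ⟨⟨hbot, hjoin⟩, hle, ?_⟩
  -- greatest such
  intro h hh hhf c
  refine le_isGLB_iff (hδ' c) |>.2 ?_ |>.trans (le_refl _)
  · intro x hx
    obtain ⟨a, ha, hxa⟩ := hx
    have hhm : Monotone h := by
      intro x y hxy
      calc h x ≤ h x ⊔ h y := le_sup_left
        _ = h (x ⊔ y) := (hh.2 x y).symm
        _ = h y := by rw [sup_eq_right.2 hxy]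
    calc h c ≤ h (Finset.univ.sup a) := hhm ha
      _ = Finset.univ.sup (fun i => h (a i)) :=
        Finset.comp_sup_eq_sup_comp h (fun x y => hh.2 x y) hh.1
      _ ≤ Finset.univ.sup (fun i => f i (a i)) :=
        Finset.sup_mono_fun fun i _ => hhf i (a i)
      _ = x := hxa.symm
end

section
/- Let L be a finite distributive lattice and f, g join-endomorphisms of L. Let h be the greatest join-endomorphism below both f and g (i.e., their meet in the lattice of join-endomorphisms ordered pointwise). Then for all c ∈ L, h(c) = ⨅ { f(a) ⊔ g(c \ a) | a ≤ c }, where c \ a denotes the subtraction operation (co-Heyting difference) of L. -/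
private lemma sup_inf'_distrib {α ι : Type*} [DistribLattice α] (s : Finset ι)
    (hs : s.Nonempty) (f : ι → α) (x : α) :
    x ⊔ s.inf' hs f = s.inf' hs (fun i => x ⊔ f i) := by
  induction hs using Finset.Nonempty.cons_induction with
  | singleton a => simp
  | cons a s ha hs ih => rw [Finset.inf'_cons hs, Finset.inf'_cons hs, sup_inf_left, ih]

theorem meet_via_subtraction {L : Type*} [DistribLattice L] [OrderBot L] [Fintype L]
    (sub : L → L → L) (hsub : ∀ a b c : L, sub c a ≤ b ↔ c ≤ a ⊔ b)
    (f g : L → L) (hf : IsJoinEndo f) (hg : IsJoinEndo g)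
    (h : L → L)
    (hh : IsJoinEndo h ∧ h ≤ f ∧ h ≤ g ∧
      ∀ h' : L → L, IsJoinEndo h' → h' ≤ f → h' ≤ g → h' ≤ h) :
    ∀ c : L, IsGLB {x : L | ∃ a : L, a ≤ c ∧ x = f a ⊔ g (sub c a)} (h c) := by
  classical
  obtain ⟨hh0, hhf, hhg, hmax⟩ := hh
  have monoOf : ∀ k : L → L, IsJoinEndo k → Monotone k := by
    intro k hk a b hab
    have e := hk.2 a b
    rw [sup_eq_right.mpr hab] at e
    rw [e]; exact le_sup_left
  have hsub_ge : ∀ c a : L, c ≤ a ⊔ sub c a := fun c a => (hsub a (sub c a) c).1 le_rfl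
  have sub_le : ∀ a b c : L, c ≤ a ⊔ b → sub c a ≤ b := fun a b c => (hsub a b c).2
  -- h c is a lower bound
  have hlb : ∀ c a : L, a ≤ c → h c ≤ f a ⊔ g (sub c a) := by
    intro c a hac
    have h1 : h c ≤ h (a ⊔ sub c a) := monoOf h hh0 (hsub_ge c a)
    rw [hh0.2] at h1
    exact h1.trans (sup_le_sup (hhf a) (hhg _))
  set F : L → L → L := fun c a => f a ⊔ g (sub c a) with hF
  set T : L → Finset L := fun c => Finset.univ.filter (fun a => a ≤ c) with hT
  have hTne : ∀ c, (T c).Nonempty := fun c => ⟨c, by simp [hT]⟩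
  have hTmem : ∀ c a, a ∈ T c ↔ a ≤ c := by intro c a; simp [hT]
  set h₀ : L → L := fun c => (T c).inf' (hTne c) (F c) with hh₀
  have h₀le : ∀ c a, a ≤ c → h₀ c ≤ F c a := fun c a hac =>
    Finset.inf'_le _ ((hTmem c a).2 hac)
  have le_h₀ : ∀ x c : L, (∀ a, a ≤ c → x ≤ F c a) → x ≤ h₀ c := fun x c hx =>
    Finset.le_inf' _ _ fun a ha => hx a ((hTmem c a).1 ha)
  -- h₀ is monotone
  have h₀mono : ∀ c d : L, c ≤ d → h₀ c ≤ h₀ d := by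
    intro c d hcd
    refine le_h₀ _ _ fun a had => ?_
    have h1 : h₀ c ≤ F c (a ⊓ c) := h₀le c (a ⊓ c) inf_le_right
    refine h1.trans (sup_le_sup (monoOf f hf inf_le_left) (monoOf g hg ?_))
    refine sub_le _ _ _ ?_
    have h2 : c ≤ a ⊔ sub d a := hcd.trans (hsub_ge d a)
    calc c = c ⊓ (a ⊔ sub d a) := (inf_eq_left.mpr h2).symm
      _ = (c ⊓ a) ⊔ (c ⊓ sub d a) := inf_sup_left c a _
      _ ≤ (a ⊓ c) ⊔ sub d a := sup_le_sup (le_of_eq (inf_comm c a)) inf_le_right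
  -- h₀ is a join endomorphism
  have h₀bot : h₀ ⊥ = ⊥ := by
    refine le_bot_iff.mp ((h₀le ⊥ ⊥ le_rfl).trans ?_)
    have : sub (⊥ : L) ⊥ = ⊥ := le_bot_iff.mp (sub_le ⊥ ⊥ ⊥ (by simp))
    simp [hF, this, hf.1, hg.1]
  have h₀sup : ∀ c d : L, h₀ (c ⊔ d) = h₀ c ⊔ h₀ d := by
    intro c d
    refine le_antisymm ?_ (sup_le (h₀mono c _ le_sup_left) (h₀mono d _ le_sup_right))
    have key : ∀ a b : L, a ≤ c → b ≤ d → h₀ (c ⊔ d) ≤ F c a ⊔ F d b := by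
      intro a b hac hbd
      have h1 : h₀ (c ⊔ d) ≤ F (c ⊔ d) (a ⊔ b) :=
        h₀le _ _ (sup_le_sup hac hbd)
      have h2 : sub (c ⊔ d) (a ⊔ b) ≤ sub c a ⊔ sub d b := by
        refine sub_le _ _ _ (sup_le ?_ ?_)
        · exact (hsub_ge c a).trans (sup_le_sup le_sup_left le_sup_left)
        · exact (hsub_ge d b).trans (sup_le_sup le_sup_right le_sup_right)
      have h3 : g (sub (c ⊔ d) (a ⊔ b)) ≤ g (sub c a) ⊔ g (sub d b) := by
        have := monoOf g hg h2
        rwa [hg.2] at this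
      refine h1.trans ?_
      simp only [hF, hf.2]
      calc f a ⊔ f b ⊔ g (sub (c ⊔ d) (a ⊔ b))
          ≤ f a ⊔ f b ⊔ (g (sub c a) ⊔ g (sub d b)) := sup_le_sup le_rfl h3
        _ = f a ⊔ g (sub c a) ⊔ (f b ⊔ g (sub d b)) := by ac_rfl
    have eq1 : h₀ c ⊔ h₀ d
        = (T c).inf' (hTne c) (fun a => (T d).inf' (hTne d) (fun b => F c a ⊔ F d b)) := by
      rw [sup_comm, sup_inf'_distrib]
      refine Finset.inf'_congr _ rfl fun a _ => ?_
      rw [sup_comm, sup_inf'_distrib]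
    rw [eq1]
    refine Finset.le_inf' _ _ fun a ha => Finset.le_inf' _ _ fun b hb =>
      key a b ((hTmem c a).1 ha) ((hTmem d b).1 hb)
  have h₀f : h₀ ≤ f := by
    intro c
    have e : sub c c = ⊥ := le_bot_iff.mp (sub_le c ⊥ c (by simp))
    have := h₀le c c le_rfl
    simpa [hF, e, hg.1] using this
  have h₀g : h₀ ≤ g := by
    intro c
    have h1 := h₀le c ⊥ bot_le
    have h2 : sub c ⊥ ≤ c := sub_le ⊥ c c (by simp)
    simp only [hF, hf.1, bot_sup_eq] at h1
    exact h1.trans (monoOf g hg h2)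
  have h₀h : h₀ ≤ h := hmax h₀ ⟨h₀bot, h₀sup⟩ h₀f h₀g
  have hh₀' : ∀ c, h c ≤ h₀ c := fun c => le_h₀ _ _ (hlb c)
  intro c
  constructor
  · rintro x ⟨a, hac, rfl⟩
    exact hlb c a hac
  · intro x hx
    refine (le_h₀ x c fun a hac => hx ⟨a, hac, rfl⟩).trans (h₀h c)
end

section
/- Let L be a finite distributive lattice, f and g join-endomorphisms of L, and h the greatest join-endomorphism below both f and g. Then for every join-irreducible element a of L, h(a) = f(a) ⊓ g(a). -/
open Classical in
noncomputable def candEndo {L : Type*} [DistribLattice L] [OrderBot L] [Fintype L]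
    (f g : L → L) (x : L) : L :=
  (Finset.univ.filter fun b => SupIrred b ∧ b ≤ x).sup (fun b => f b ⊓ g b)

open Classical in
lemma candEndo_le {L : Type*} [DistribLattice L] [OrderBot L] [Fintype L]
    (f g : L → L) (x c : L) (hc : SupIrred c) (hle : c ≤ x) :
    f c ⊓ g c ≤ candEndo f g x := by
  unfold candEndo
  exact Finset.le_sup (f := fun b => f b ⊓ g b)
    (Finset.mem_filter.mpr ⟨Finset.mem_univ _, hc, hle⟩)

open Classical in
lemma candEndo_sup_le {L : Type*} [DistribLattice L] [OrderBot L] [Fintype L]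
    (f g : L → L) (x y : L) (hy : ∀ c, SupIrred c → c ≤ x → f c ⊓ g c ≤ y) :
    candEndo f g x ≤ y := by
  unfold candEndo
  apply Finset.sup_le
  intro c hc
  simp only [Finset.mem_filter] at hc
  exact hy c hc.2.1 hc.2.2

theorem meet_on_join_irreducibles {L : Type*} [DistribLattice L] [OrderBot L] [Fintype L]
    (f g : L → L) (hf : IsJoinEndo f) (hg : IsJoinEndo g)
    (h : L → L)
    (hh : IsJoinEndo h ∧ h ≤ f ∧ h ≤ g ∧
      ∀ h' : L → L, IsJoinEndo h' → h' ≤ f → h' ≤ g → h' ≤ h) :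
    ∀ a : L, SupIrred a → h a = f a ⊓ g a := by
  classical
  obtain ⟨hendo, hhf, hhg, hmax⟩ := hh
  have fmono : Monotone f := fun a b hab => by
    have := hf.2 a b
    rw [sup_eq_right.mpr hab] at this
    exact le_sup_left.trans this.symm.le
  have gmono : Monotone g := fun a b hab => by
    have := hg.2 a b
    rw [sup_eq_right.mpr hab] at this
    exact le_sup_left.trans this.symm.le
  have h'endo : IsJoinEndo (candEndo f g) := by
    constructor
    · refine le_antisymm (candEndo_sup_le f g ⊥ ⊥ ?_) bot_le
      intro c hc hle
      exact absurd (le_bot_iff.mp hle) hc.ne_bot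
    · intro a b
      apply le_antisymm
      · apply candEndo_sup_le
        intro c hirr hle
        have hceq : c = (c ⊓ a) ⊔ (c ⊓ b) := by
          rw [← inf_sup_left, inf_eq_left.mpr hle]
        rcases hirr.2 hceq.symm with h1 | h1
        · exact le_sup_of_le_left (candEndo_le f g a c hirr (h1 ▸ inf_le_right))
        · exact le_sup_of_le_right (candEndo_le f g b c hirr (h1 ▸ inf_le_right))
      · apply sup_le <;> apply candEndo_sup_le <;> intro c hirr hle
        · exact candEndo_le f g _ c hirr (hle.trans le_sup_left)
        · exact candEndo_le f g _ c hirr (hle.trans le_sup_right)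
  have h'f : candEndo f g ≤ f := fun x =>
    candEndo_sup_le f g x (f x) (fun c _ hle => inf_le_left.trans (fmono hle))
  have h'g : candEndo f g ≤ g := fun x =>
    candEndo_sup_le f g x (g x) (fun c _ hle => inf_le_right.trans (gmono hle))
  have h'h : candEndo f g ≤ h := hmax _ h'endo h'f h'g
  intro a ha
  exact le_antisymm (le_inf (hhf a) (hhg a))
    ((candEndo_le f g a a ha le_rfl).trans (h'h a))
end

section
/- Let L be a finite distributive lattice. A function f : L → L is a join-endomorphism if and only if for every e ∈ L, f(e) = ⨆ { f(e') | e' ≤ e and e' is join-irreducible }. -/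
theorem join_endo_iff_sup_of_irreducibles {L : Type*} [DistribLattice L] [OrderBot L]
    [Fintype L] (f : L → L) :
    IsJoinEndo f ↔
      ∀ e : L, IsLUB {x : L | ∃ e' : L, e' ≤ e ∧ SupIrred e' ∧ x = f e'} (f e) := by
  constructor
  · rintro ⟨hbot, hsup⟩ e
    have hmono : Monotone f := fun a b hab => by
      have : f b = f a ⊔ f b := by rw [← hsup, sup_eq_right.2 hab]
      rw [this]; exact le_sup_left
    constructor
    · rintro x ⟨e', he', _, rfl⟩
      exact hmono he'
    · rintro u hu
      obtain ⟨s, hse, hs⟩ := exists_supIrred_decomposition e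
      have hfs : ∀ t : Finset L, f (t.sup id) = t.sup f := by
        intro t
        induction t using Finset.cons_induction with
        | empty => simpa using hbot
        | cons a t ha ih => simp [hsup, ih]
      calc f e = s.sup f := by rw [← hse, hfs]
        _ ≤ u := Finset.sup_le fun b hb =>
            hu ⟨b, hse ▸ Finset.le_sup (f := id) hb, hs hb, rfl⟩
  · intro h
    have hmono : Monotone f := fun a b hab => by
      refine (h a).2 fun x hx => (h b).1 ?_
      obtain ⟨e', he', hirr, rfl⟩ := hx
      exact ⟨e', he'.trans hab, hirr, rfl⟩
    constructor
    · refine le_antisymm ((h ⊥).2 ?_) bot_le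
      rintro x ⟨e', he', hirr, rfl⟩
      exact absurd (le_bot_iff.1 he' ▸ hirr) not_supIrred_bot
    · intro a b
      refine le_antisymm ((h (a ⊔ b)).2 ?_) ?_
      · rintro x ⟨e', he', hirr, rfl⟩
        rcases (hirr.supPrime.le_sup).1 he' with h' | h'
        · exact le_sup_of_le_left (hmono h')
        · exact le_sup_of_le_right (hmono h')
      · exact sup_le (hmono le_sup_left) (hmono le_sup_right)
end

section
/- Let L be a finite distributive lattice, f and g join-endomorphisms of L, and h : L → L a function satisfying: h(a) = f(a) ⊓ g(a) for every join-irreducible a and for a = ⊥, and h(a) = h(b) ⊔ h(c) whenever b, c are distinct elements covered by a. Then h is the greatest join-endomorphism below both f and g. -/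
private lemma exists_le_covBy' {L : Type*} [Lattice L] [Fintype L] {x a : L} (hxa : x < a) :
    ∃ b, x ≤ b ∧ b ⋖ a := by
  classical
  obtain ⟨b, hb, hmax⟩ :=
    Finset.exists_maximal (s := Finset.univ.filter fun z => x ≤ z ∧ z < a) ⟨x, by simp [hxa]⟩
  simp only [Finset.mem_filter, Finset.mem_univ, true_and] at hb hmax
  exact ⟨b, hb.1, hb.2, fun z hbz hza => hbz.not_ge (hmax ⟨hb.1.trans hbz.le, hza⟩ hbz.le)⟩

private lemma joinEndo_mono {L : Type*} [Lattice L] [OrderBot L] {f : L → L}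
    (hf : IsJoinEndo f) : Monotone f := by
  intro a b hab
  have : f b = f a ⊔ f b := by rw [← hf.2, sup_eq_right.2 hab]
  rw [this]; exact le_sup_left

private lemma joinEndo_finset_sup {L : Type*} [Lattice L] [OrderBot L] {f : L → L}
    (hf : IsJoinEndo f) (s : Finset L) : f (s.sup id) = s.sup f := by
  classical
  induction s using Finset.cons_induction with
  | empty => simpa using hf.1
  | cons a s ha ih => simp [Finset.sup_cons, hf.2, ih]

theorem meet_characterization {L : Type*} [DistribLattice L] [OrderBot L] [Fintype L]
    (f g : L → L) (hf : IsJoinEndo f) (hg : IsJoinEndo g)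
    (h : L → L)
    (h_irr : ∀ a : L, SupIrred a → h a = f a ⊓ g a)
    (h_bot : h ⊥ = f ⊥ ⊓ g ⊥)
    (h_cov : ∀ a b c : L, b ⋖ a → c ⋖ a → b ≠ c → h a = h b ⊔ h c) :
    IsJoinEndo h ∧ h ≤ f ∧ h ≤ g ∧
      ∀ h' : L → L, IsJoinEndo h' → h' ≤ f → h' ≤ g → h' ≤ h := by
  classical
  set H : L → L := fun a =>
    (Finset.univ.filter fun j => SupIrred j ∧ j ≤ a).sup (fun j => f j ⊓ g j) with hH
  have hmemH : ∀ {j a : L}, SupIrred j → j ≤ a →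
      f j ⊓ g j ≤ H a := by
    intro j a hj hja
    exact Finset.le_sup (f := fun j => f j ⊓ g j) (by simp [hj, hja])
  have hHle : ∀ a : L, H a ≤ f a ⊓ g a := by
    intro a
    apply Finset.sup_le
    intro j hjmem
    simp only [Finset.mem_filter, Finset.mem_univ, true_and] at hjmem
    exact inf_le_inf (joinEndo_mono hf hjmem.2) (joinEndo_mono hg hjmem.2)
  have hHmono : Monotone H := by
    intro a b hab
    apply Finset.sup_le
    intro j hjmem
    simp only [Finset.mem_filter, Finset.mem_univ, true_and] at hjmem
    exact hmemH hjmem.1 (hjmem.2.trans hab)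
  have hHbot : H ⊥ = ⊥ := by
    rw [hH]
    apply le_bot_iff.1
    apply Finset.sup_le
    intro j hjmem
    simp only [Finset.mem_filter, Finset.mem_univ, true_and] at hjmem
    exact absurd (le_bot_iff.1 hjmem.2) hjmem.1.ne_bot
  have hHsup : ∀ a b : L, H (a ⊔ b) = H a ⊔ H b := by
    intro a b
    refine le_antisymm ?_ (sup_le (hHmono le_sup_left) (hHmono le_sup_right))
    apply Finset.sup_le
    intro j hjmem
    simp only [Finset.mem_filter, Finset.mem_univ, true_and] at hjmem
    rcases hjmem.1.supPrime.le_sup.1 hjmem.2 with hj | hj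
    · exact le_sup_of_le_left (hmemH hjmem.1 hj)
    · exact le_sup_of_le_right (hmemH hjmem.1 hj)
  -- h = H
  have key : ∀ a : L, h a = H a := by
    intro a
    induction a using WellFoundedLT.induction with
    | ind a IH =>
      by_cases hbot : a = ⊥
      · subst hbot
        rw [h_bot, hHbot, hf.1, hg.1, inf_idem]
      by_cases hirr : SupIrred a
      · rw [h_irr a hirr]
        refine le_antisymm (hmemH hirr le_rfl) (hHle a)
      · rw [not_supIrred] at hirr
        rcases hirr with hmin | ⟨x, y, hxy, hx, hy⟩
        · exact absurd (le_bot_iff.1 (hmin bot_le)) hbot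
        obtain ⟨b, hxb, hba⟩ := exists_le_covBy' hx
        obtain ⟨c, hyc, hca⟩ := exists_le_covBy' hy
        have hbc : b ≠ c := by
          rintro rfl
          exact absurd (hxy ▸ sup_le hxb hyc) (not_le_of_gt hba.lt)
        have hbca : b ⊔ c = a := by
          have hblt : b < b ⊔ c := by
            rcases lt_or_eq_of_le (le_sup_left : b ≤ b ⊔ c) with hlt | heq
            · exact hlt
            · exfalso
              have hcb : c ≤ b := le_sup_right.trans heq.ge
              rcases lt_or_eq_of_le hcb with hlt | heq'
              · exact hca.2 hlt hba.lt
              · exact hbc heq'.symm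
          exact (sup_le hba.le hca.le).lt_or_eq.resolve_left (hba.2 hblt)
        rw [h_cov a b c hba hca hbc, IH b hba.lt, IH c hca.lt, ← hHsup, hbca]
  have hendo : IsJoinEndo h := by
    constructor
    · rw [key]; exact hHbot
    · intro a b; rw [key, key, key, hHsup]
  refine ⟨hendo, ?_, ?_, ?_⟩
  · intro a; rw [key]; exact (hHle a).trans inf_le_left
  · intro a; rw [key]; exact (hHle a).trans inf_le_right
  · intro h' hh' hh'f hh'g a
    obtain ⟨s, hsa, hs⟩ := exists_supIrred_decomposition a
    rw [key, ← hsa, joinEndo_finset_sup hh']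
    apply Finset.sup_le
    intro j hj
    exact (le_inf (hh'f j) (hh'g j)).trans (hmemH (hs hj) (Finset.le_sup (f := id) hj))
end

section
/- Let L be a finite lattice, S a finite set of join-endomorphisms of L, and h the greatest join-endomorphism below every element of S (pointwise). Let σ : L → L satisfy σ ≥ h pointwise. If u, v ∈ L satisfy σ(u) ⊔ σ(v) < σ(u ⊔ v), then the function σ' obtained from σ by redefining σ'(u ⊔ v) = σ(u) ⊔ σ(v) still satisfies σ' ≥ h pointwise, and σ' < σ in the pointwise order. -/
theorem gmeet_update_case1 {L : Type*} [Lattice L] [OrderBot L] [Fintype L] [DecidableEq L]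
    (S : Set (L → L)) (hSfin : S.Finite) (hS : ∀ f ∈ S, IsJoinEndo f)
    (h : L → L)
    (hh : IsJoinEndo h ∧ (∀ f ∈ S, h ≤ f) ∧
      ∀ h' : L → L, IsJoinEndo h' → (∀ f ∈ S, h' ≤ f) → h' ≤ h)
    (σ : L → L) (hσ : h ≤ σ)
    (u v : L) (huv : σ u ⊔ σ v < σ (u ⊔ v)) :
    h ≤ Function.update σ (u ⊔ v) (σ u ⊔ σ v) ∧
      Function.update σ (u ⊔ v) (σ u ⊔ σ v) < σ := by
  constructor
  · intro x
    by_cases hx : x = u ⊔ v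
    · subst hx
      rw [Function.update_self]
      calc h (u ⊔ v) = h u ⊔ h v := hh.1.2 u v
        _ ≤ σ u ⊔ σ v := sup_le_sup (hσ u) (hσ v)
    · rw [Function.update_of_ne hx]; exact hσ x
  · constructor
    · intro x
      by_cases hx : x = u ⊔ v
      · subst hx; rw [Function.update_self]; exact le_of_lt huv
      · rw [Function.update_of_ne hx]
    · intro hle
      have := hle (u ⊔ v)
      rw [Function.update_self] at this
      exact absurd this (not_le_of_gt huv)
end

section
/- Let L be a finite lattice, S a finite set of join-endomorphisms of L, and h the greatest join-endomorphism below every element of S. Let σ : L → L satisfy σ ≥ h pointwise. If u, v ∈ L satisfy σ(u) ⊔ σ(v) ≰ σ(u ⊔ v), then the function σ' defined by σ'(u) = σ(u) ⊓ σ(u ⊔ v), σ'(v) = σ(v) ⊓ σ(u ⊔ v), and σ'(x) = σ(x) elsewhere, satisfies σ' ≥ h pointwise and σ' < σ in the pointwise order. -/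
theorem gmeet_update_case2 {L : Type*} [Lattice L] [OrderBot L] [Fintype L] [DecidableEq L]
    (S : Set (L → L)) (hSfin : S.Finite) (hS : ∀ f ∈ S, IsJoinEndo f)
    (h : L → L)
    (hh : IsJoinEndo h ∧ (∀ f ∈ S, h ≤ f) ∧
      ∀ h' : L → L, IsJoinEndo h' → (∀ f ∈ S, h' ≤ f) → h' ≤ h)
    (σ : L → L) (hσ : h ≤ σ)
    (u v : L) (huv : ¬ σ u ⊔ σ v ≤ σ (u ⊔ v))
    (σ' : L → L)
    (hσ' : σ' = fun x =>
      if x = u then σ u ⊓ σ (u ⊔ v)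
      else if x = v then σ v ⊓ σ (u ⊔ v)
      else σ x) :
    h ≤ σ' ∧ σ' < σ := by
  obtain ⟨⟨hbot, hjoin⟩, -, -⟩ := hh
  subst hσ'
  have hle : h ≤ fun x => if x = u then σ u ⊓ σ (u ⊔ v)
      else if x = v then σ v ⊓ σ (u ⊔ v) else σ x := by
    intro x
    dsimp only
    by_cases h1 : x = u
    · subst h1
      simp only [if_pos rfl]
      exact le_inf (hσ x) ((show h x ≤ h (x ⊔ v) by rw [hjoin]; exact le_sup_left).trans (hσ _))
    by_cases h2 : x = v
    · subst h2
      simp only [if_neg h1, if_pos rfl]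
      exact le_inf (hσ x) ((show h x ≤ h (u ⊔ x) by rw [hjoin]; exact le_sup_right).trans (hσ _))
    simp only [if_neg h1, if_neg h2]
    exact hσ x
  refine ⟨hle, ?_, ?_⟩
  · intro x
    dsimp only
    split_ifs with h1 h2
    · exact h1 ▸ inf_le_left
    · exact h2 ▸ inf_le_left
    · exact le_rfl
  · intro hcon
    apply huv
    have hu := hcon u
    have hv := hcon v
    simp only [if_pos rfl] at hu
    have h1 : σ u ≤ σ (u ⊔ v) := le_trans hu inf_le_right
    have h2 : σ v ≤ σ (u ⊔ v) := by
      by_cases hvu : v = u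
      · exact hvu ▸ h1
      · simp only [if_neg hvu, if_pos rfl] at hv
        exact le_trans hv inf_le_right
    exact sup_le h1 h2
end
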